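/- Suppose κ > λ are infinite cardinals with 2^λ = 2^κ. Then for every set A ⊆ κ^κ there is a set C ⊆ κ^κ × 2^κ that is closed (in the product topology generated by all basic open sets N_η for η : α → κ with α < κ, resp. η : α → 2) such that A is the first projection of C, i.e. A = {f ∈ κ^κ : ∃ g ∈ 2^κ, (f,g) ∈ C}. -/

import Mathlib

open Cardinal Set

universe u v w

namespace GDST

variable {K : Type u} {A : Type v}

/-- The set `N_η` determined by the partial function with domain `Y` and values given by `η`. -/
def nbhd (Y : Set K) (η : K → A) : Set (K → A) := {ζ | ∀ i ∈ Y, ζ i = η i}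

/-- Basic κ-open subsets of `K → K`: sets `N_η` where `η` is a partial function with
domain of size `< #K`, together with the empty set. -/
def IsBasicOpen (S : Set (K → A)) : Prop :=
  (∃ (Y : Set K) (η : K → A), #Y < #K ∧ S = nbhd Y η) ∨ S = ∅

/-- Open in the topology generated by the basic κ-open sets. -/
def IsOpenStd (U : Set (K → A)) : Prop :=
  ∀ ζ ∈ U, ∃ S : Set (K → A), IsBasicOpen S ∧ ζ ∈ S ∧ S ⊆ U

/-- A union of at most `μ` basic κ-open sets; `(κ,μ)`-open. -/
def IsMuOpen (μ : Cardinal.{u}) (U : Set (K → A)) : Prop :=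
  ∃ (ι : Type u) (f : ι → Set (K → A)), #ι ≤ μ ∧ (∀ i, IsBasicOpen (f i)) ∧ U = ⋃ i, f i

/-- `(κ,μ)`-closed: the complement is `(κ,μ)`-open. -/
def IsMuClosed (μ : Cardinal.{u}) (C : Set (K → A)) : Prop := IsMuOpen μ Cᶜ

/-- The `(κ,μ)`-Borel sets: the smallest class containing the basic κ-open sets and closed
under complements and unions and intersections of length at most `μ`. -/
inductive MuBorel (μ : Cardinal.{u}) : Set (K → A) → Prop
  | basic (S : Set (K → A)) : IsBasicOpen S → MuBorel μ S
  | compl (S : Set (K → A)) : MuBorel μ S → MuBorel μ Sᶜ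
  | iUnion (ι : Type u) (f : ι → Set (K → A)) : #ι ≤ μ → (∀ i, MuBorel μ (f i)) →
      MuBorel μ (⋃ i, f i)
  | iInter (ι : Type u) (f : ι → Set (K → A)) : #ι ≤ μ → (∀ i, MuBorel μ (f i)) →
      MuBorel μ (⋂ i, f i)

/-- κ-open: a union of at most `κ = #K` basic κ-open sets. -/
def IsKOpen (U : Set (K → A)) : Prop := IsMuOpen #K U

/-- κ-closed. -/
def IsKClosed (C : Set (K → A)) : Prop := IsMuClosed #K C

/-- κ-Borel. -/
def KBorel (S : Set (K → A)) : Prop := MuBorel #K S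

/- Product space versions, for subsets of `(K → A) × (K → B)`. -/
section Prod

variable {B : Type w}

/-- Basic κ-open subsets of the product: products of basic κ-open sets. -/
def IsBasicOpen2 (S : Set ((K → A) × (K → B))) : Prop :=
  ∃ (S₁ : Set (K → A)) (S₂ : Set (K → B)), IsBasicOpen S₁ ∧ IsBasicOpen S₂ ∧ S = S₁ ×ˢ S₂

def IsOpenStd2 (U : Set ((K → A) × (K → B))) : Prop :=
  ∀ p ∈ U, ∃ S, IsBasicOpen2 S ∧ p ∈ S ∧ S ⊆ U

def IsMuOpen2 (μ : Cardinal.{u}) (U : Set ((K → A) × (K → B))) : Prop :=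
  ∃ (ι : Type u) (f : ι → Set ((K → A) × (K → B))),
    #ι ≤ μ ∧ (∀ i, IsBasicOpen2 (f i)) ∧ U = ⋃ i, f i

def IsMuClosed2 (μ : Cardinal.{u}) (C : Set ((K → A) × (K → B))) : Prop := IsMuOpen2 μ Cᶜ

inductive MuBorel2 (μ : Cardinal.{u}) : Set ((K → A) × (K → B)) → Prop
  | basic (S : Set ((K → A) × (K → B))) : IsBasicOpen2 S → MuBorel2 μ S
  | compl (S : Set ((K → A) × (K → B))) : MuBorel2 μ S → MuBorel2 μ Sᶜ
  | iUnion (ι : Type u) (f : ι → Set ((K → A) × (K → B))) : #ι ≤ μ → (∀ i, MuBorel2 μ (f i)) →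
      MuBorel2 μ (⋃ i, f i)
  | iInter (ι : Type u) (f : ι → Set ((K → A) × (K → B))) : #ι ≤ μ → (∀ i, MuBorel2 μ (f i)) →
      MuBorel2 μ (⋂ i, f i)

def IsKOpen2 (U : Set ((K → A) × (K → B))) : Prop := IsMuOpen2 #K U

def IsKClosed2 (C : Set ((K → A) × (K → B))) : Prop := IsMuClosed2 #K C

def KBorel2 (S : Set ((K → A) × (K → B))) : Prop := MuBorel2 #K S

/-- κ-Σ¹₁ : projections of κ-Borel subsets of the product. -/
def KSigma11 (S : Set (K → A)) : Prop :=
  ∃ C : Set ((K → A) × (K → A)), KBorel2 C ∧ S = Prod.fst '' C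

end Prod

end GDST

namespace GDST

/-- Suppose κ > λ are infinite cardinals with 2^λ = 2^κ. Then for every set
A ⊆ κ^κ there is a set C ⊆ κ^κ × 2^κ, closed in the product topology generated by the basic
open sets N_η for η : α → κ (resp. η : α → 2) with α < κ, whose first projection is A. -/
theorem statement0 (κ lam : Cardinal.{u}) (hlam : ℵ₀ ≤ lam) (hlt : lam < κ)
    (h2 : (2 : Cardinal.{u}) ^ lam = 2 ^ κ)
    (K : Type u) [LinearOrder K] [IsWellOrder K (· < ·)]
    (hK : Ordinal.type ((· < ·) : K → K → Prop) = κ.ord) :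
    ∀ A : Set (K → K), ∃ C : Set ((K → K) × (K → Bool)),
      (∀ p ∉ C, ∃ (a b : K) (η : K → K) (ν : K → Bool),
          p ∈ (nbhd (Set.Iio a) η) ×ˢ (nbhd (Set.Iio b) ν) ∧
          Disjoint ((nbhd (Set.Iio a) η) ×ˢ (nbhd (Set.Iio b) ν)) C) ∧
      A = Prod.fst '' C := by
  intro A
  have hκ : ℵ₀ ≤ κ := hlam.trans hlt.le
  have hcard : #K = κ := by
    rw [← Ordinal.card_type ((· < ·) : K → K → Prop), hK, Cardinal.card_ord]
  -- an element `b` whose initial segment has cardinality `lam`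
  have hbl : lam.ord < Ordinal.type ((· < ·) : K → K → Prop) := by
    rw [hK]; exact Cardinal.ord_lt_ord.mpr hlt
  set b : K := Ordinal.enum (· < ·) ⟨lam.ord, hbl⟩ with hbdef
  have hb : #(Set.Iio b) = lam := by
    have := Ordinal.card_typein (r := ((· < ·) : K → K → Prop)) b
    rw [Ordinal.typein_enum] at this
    have h' : lam = #{y // y < b} := by simpa [Set.Iio, Cardinal.card_ord] using this
    exact h'.symm
  -- there is no maximal element
  have hnomax : ∀ i : K, ∃ a : K, i < a := by
    intro i
    have h1 : Order.succ (Ordinal.typein ((· < ·) : K → K → Prop) i) <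
        Ordinal.type ((· < ·) : K → K → Prop) := by
      rw [hK]
      exact (Cardinal.isSuccLimit_ord hκ).succ_lt (by rw [← hK]; exact Ordinal.typein_lt_type _ i)
    refine ⟨Ordinal.enum (· < ·) ⟨Order.succ (Ordinal.typein ((· < ·) : K → K → Prop) i), h1⟩, ?_⟩
    rw [← Ordinal.typein_lt_typein ((· < ·) : K → K → Prop), Ordinal.typein_enum]
    exact Order.lt_succ _
  have hne : Nonempty K := ⟨b⟩
  -- an injection coding elements of K → K by binary sequences on Iio b
  have hle : #(K → K) ≤ #(Set.Iio b → Bool) := by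
    rw [Cardinal.mk_arrow, Cardinal.mk_arrow, hcard, hb, Cardinal.mk_bool,
      Cardinal.lift_id, Cardinal.lift_uzero, Cardinal.lift_two,
      Cardinal.power_self_eq hκ, ← h2]
  obtain ⟨e⟩ := Cardinal.le_def _ _ |>.mp hle
  -- restriction map
  set r : (K → Bool) → (Set.Iio b → Bool) := fun g i => g i.1 with hrdef
  refine ⟨{p | p.1 ∈ A ∧ e p.1 = r p.2}, ?_, ?_⟩
  · rintro ⟨f, g⟩ hp
    simp only [Set.mem_setOf_eq, not_and] at hp
    by_cases hex : ∃ f' ∈ A, e f' = r g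
    · obtain ⟨f', hf'A, hf'e⟩ := hex
      have hfne : f ≠ f' := by
        rintro rfl; exact hp hf'A hf'e
      obtain ⟨i, hi⟩ : ∃ i, f i ≠ f' i := by
        by_contra h
        push_neg at h
        exact hfne (funext h)
      obtain ⟨a, ha⟩ := hnomax i
      refine ⟨a, b, f, g, ⟨fun _ _ => rfl, fun _ _ => rfl⟩, ?_⟩
      rw [Set.disjoint_left]
      rintro ⟨f'', g''⟩ ⟨h1, h2'⟩ ⟨hA'', he''⟩
      have hr : r g'' = r g := by
        funext j; exact h2' j.1 j.2
      have : f'' = f' := e.injective (by rw [he'', hr, hf'e])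
      exact hi (by rw [← h1 i ha, this])
    · push_neg at hex
      obtain ⟨a, _⟩ := hnomax b
      refine ⟨a, b, f, g, ⟨fun _ _ => rfl, fun _ _ => rfl⟩, ?_⟩
      rw [Set.disjoint_left]
      rintro ⟨f'', g''⟩ ⟨_, h2'⟩ ⟨hA'', he''⟩
      have hr : r g'' = r g := by
        funext j; exact h2' j.1 j.2
      exact hex f'' hA'' (by rw [he'', hr])
  · ext f
    constructor
    · intro hf
      refine ⟨⟨f, fun i => if h : i ∈ Set.Iio b then e f ⟨i, h⟩ else false⟩, ⟨hf, ?_⟩, rfl⟩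
      funext j
      simp only [hrdef]
      rw [dif_pos j.2]
    · rintro ⟨⟨f', g⟩, ⟨hf', _⟩, rfl⟩
      exact hf'

end GDST
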